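/- For the CPS translation of union-intersection types defined by α* = α, (S→T)* = S* → ⟦T⟧, (⋂R)* = ⋂R*, (⋃S)⁺ = ⋂¬S*, ⟦T⟧ = ¬T⁺, the following monotonicity holds: if T₀ ≤ T₁ in the source subtype relation, then ⟦T₀⟧ ≤ ⟦T₁⟧ in the target subtype relation; moreover T₀ ≤ T₁ implies T₁⁺ ≤ T₀⁺, and S₀ ≤ S₁ implies S₀* ≤ S₁*. -/
import Mathlib


/-! ## Union-intersection types -/

mutual
/-- Raw types `R ::= α | S → T`. -/
inductive RawTy : Type
  | atom : ℕ → RawTy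
  | arrow : STy → TTy → RawTy
/-- Subsidiary types: finite formal intersections of raw types
    (the empty intersection is ω). -/
inductive STy : Type
  | inter : List RawTy → STy
/-- Types: finite formal unions of subsidiary types
    (the empty union is Ʊ). -/
inductive TTy : Type
  | union : List STy → TTy
end

/-- A subsidiary type regarded as a type (a singleton union). -/
def STy.toT (S : STy) : TTy := .union [S]
/-- A raw type regarded as a subsidiary type (a singleton intersection). -/
def RawTy.toS (R : RawTy) : STy := .inter [R]

/-- ω, the empty intersection. -/
def STy.omega : STy := .inter []
/-- Ʊ, the empty union. -/
def TTy.agemo : TTy := .union []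

mutual
/-- The subtype relation on raw types. -/
inductive SubR : RawTy → RawTy → Prop
  | atom (a : ℕ) : SubR (.atom a) (.atom a)
  | arrow {S S' T T'} : SubS S' S → SubT T T' → SubR (.arrow S T) (.arrow S' T')
/-- The subtype relation on subsidiary types.  Intersections are taken up to
    associativity and commutativity; `weaken` is the projection rule
    `S ≤ S' ⟹ S ∩ S'' ≤ S'` and `pair` the pairing rule. -/
inductive SubS : STy → STy → Prop
  | ofRaw {R R'} : SubR R R' → SubS (.inter [R]) (.inter [R'])
  | weaken {l l' : List RawTy} {S'} : SubS (.inter l) S' → l.Subperm l' →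
      SubS (.inter l') S'
  | pair {S} {l' : List RawTy} : (∀ R' ∈ l', SubS S (.inter [R'])) →
      SubS S (.inter l')
/-- The subtype relation on types.  `widen` is the injection rule
    `T ≤ T' ⟹ T ≤ T'' ∪ T'` and `copair` the copairing rule. -/
inductive SubT : TTy → TTy → Prop
  | ofS {S S'} : SubS S S' → SubT (.union [S]) (.union [S'])
  | widen {T} {l l' : List STy} : SubT T (.union l) → l.Subperm l' →
      SubT T (.union l')
  | copair {l : List STy} {T} : (∀ S ∈ l, SubT (.union [S]) T) →
      SubT (.union l) T
end

/-! ## Target strict types: σ ::= α | σ̲ → τ, κ ::= ¬σ̲, τ ::= ¬κ̲ -/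

mutual
/-- Strict types σ of the target calculus: `arrow s t` is σ̲ → τ where σ̲ = ⋂σ. -/
inductive Sig : Type
  | atom : ℕ → Sig
  | arrow : List Sig → Tau → Sig
/-- Strict types τ = ¬κ̲ of the target calculus, where κ̲ = ⋂κ and each κ = ¬σ̲
    is represented by its underlying intersection σ̲ (a list of σ's). -/
inductive Tau : Type
  | neg : List (List Sig) → Tau
end

/-- A continuation type κ = ¬σ̲ is represented by the list σ̲. -/
abbrev Kap := List Sig
/-- An intersection σ̲ = ⋂σ. -/
abbrev SigU := List Sig
/-- An intersection κ̲ = ⋂κ. -/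
abbrev KapU := List Kap

mutual
/-- Target subtyping on strict types σ. -/
inductive SubSig : Sig → Sig → Prop
  | atom (a : ℕ) : SubSig (.atom a) (.atom a)
  | arrow {s s' : SigU} {t t' : Tau} :
      SubSigU s' s → SubTau t t' → SubSig (.arrow s t) (.arrow s' t')
/-- Target subtyping on intersections σ̲ (projection/pairing, up to
    associativity and commutativity). -/
inductive SubSigU : SigU → SigU → Prop
  | intro {l l' : SigU} (f : Fin l'.length → Fin l.length)
      (h : ∀ j : Fin l'.length, SubSig (l.get (f j)) (l'.get j)) :
      SubSigU l l'
/-- Target subtyping on continuation types κ = ¬σ̲ (contravariant in σ̲). -/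
inductive SubKap : Kap → Kap → Prop
  | neg {s s' : SigU} : SubSigU s' s → SubKap s s'
/-- Target subtyping on intersections κ̲. -/
inductive SubKapU : KapU → KapU → Prop
  | intro {l l' : KapU} (f : Fin l'.length → Fin l.length)
      (h : ∀ j : Fin l'.length, SubKap (l.get (f j)) (l'.get j)) :
      SubKapU l l'
/-- Target subtyping on strict types τ = ¬κ̲ (contravariant in κ̲). -/
inductive SubTau : Tau → Tau → Prop
  | neg {k k' : KapU} : SubKapU k' k → SubTau (.neg k) (.neg k')
end

/-! ## The CPS translation of types -/

mutual
/-- R* of a raw type. -/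
def starR : RawTy → Sig
  | .atom a => .atom a
  | .arrow S T => .arrow (starS S) (cpsT T)
/-- S* = ⋂R* of a subsidiary type. -/
def starS : STy → SigU
  | .inter l => starRList l
def starRList : List RawTy → SigU
  | [] => []
  | R :: l => starR R :: starRList l
/-- T⁺ = ⋂¬S* of a type ⋃S (each ¬S* is the κ represented by S*). -/
def plusT : TTy → KapU
  | .union l => plusSList l
def plusSList : List STy → KapU
  | [] => []
  | S :: l => starS S :: plusSList l
/-- ⟦T⟧ = ¬T⁺. -/
def cpsT : TTy → Tau
  | T => .neg (plusT T)
end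

/-- Monotonicity of the CPS translation of types:
T₀ ≤ T₁ implies ⟦T₀⟧ ≤ ⟦T₁⟧ and T₁⁺ ≤ T₀⁺; S₀ ≤ S₁ implies S₀* ≤ S₁*. -/
theorem cps_type_monotone :
    (∀ T₀ T₁ : TTy, SubT T₀ T₁ → SubTau (cpsT T₀) (cpsT T₁)) ∧
    (∀ T₀ T₁ : TTy, SubT T₀ T₁ → SubKapU (plusT T₁) (plusT T₀)) ∧
    (∀ S₀ S₁ : STy, SubS S₀ S₁ → SubSigU (starS S₀) (starS S₁)) := by
  have starRList_eq : ∀ l : List RawTy, starRList l = l.map starR := by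
    intro l; induction l with
    | nil => simp [starRList]
    | cons R l ih => simp [starRList, ih]
  have plusSList_eq : ∀ l : List STy, plusSList l = l.map starS := by
    intro l; induction l with
    | nil => simp [plusSList]
    | cons S l ih => simp [plusSList, ih]
  have cps_eq : ∀ T : TTy, cpsT T = .neg (plusT T) := by
    intro T; simp [cpsT]
  have sigU_of_idx : ∀ {l l' : SigU},
      (∀ j : ℕ, (hj : j < l'.length) → ∃ i, ∃ hi : i < l.length, SubSig l[i] l'[j]) →
      SubSigU l l' := by
    intro l l' h
    refine SubSigU.intro (fun j => ⟨(h j.1 j.2).choose, (h j.1 j.2).choose_spec.choose⟩)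
      (fun j => ?_)
    exact (h j.1 j.2).choose_spec.choose_spec
  have kapU_of_idx : ∀ {l l' : KapU},
      (∀ j : ℕ, (hj : j < l'.length) → ∃ i, ∃ hi : i < l.length, SubKap l[i] l'[j]) →
      SubKapU l l' := by
    intro l l' h
    refine SubKapU.intro (fun j => ⟨(h j.1 j.2).choose, (h j.1 j.2).choose_spec.choose⟩)
      (fun j => ?_)
    exact (h j.1 j.2).choose_spec.choose_spec
  -- case lemmas for the mutual induction
  have c1 : ∀ a : ℕ, SubSig (starR (.atom a)) (starR (.atom a)) := by
    intro a; simp only [starR]; exact SubSig.atom a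
  have c2 : ∀ {S S' : STy} {T T' : TTy}, SubS S' S → SubT T T' →
      SubSigU (starS S') (starS S) → SubKapU (plusT T') (plusT T) →
      SubSig (starR (.arrow S T)) (starR (.arrow S' T')) := by
    intro S S' T T' _ _ ih1 ih2
    simp only [starR, cps_eq]
    exact SubSig.arrow ih1 (SubTau.neg ih2)
  have c3 : ∀ {R R' : RawTy}, SubR R R' → SubSig (starR R) (starR R') →
      SubSigU (starS (.inter [R])) (starS (.inter [R'])) := by
    intro R R' _ ih
    simp only [starS, starRList_eq, List.map_cons, List.map_nil]
    apply sigU_of_idx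
    intro j hj
    have hj1 : j < 1 := by simpa using hj
    have hj0 : j = 0 := by omega
    subst hj0
    exact ⟨0, by simp, ih⟩
  have c4 : ∀ {l l' : List RawTy} {S' : STy}, SubS (.inter l) S' → l.Subperm l' →
      SubSigU (starS (.inter l)) (starS S') → SubSigU (starS (.inter l')) (starS S') := by
    intro l l' S' _ hsub ih
    simp only [starS, starRList_eq] at ih ⊢
    obtain ⟨f, hf⟩ := ih
    apply sigU_of_idx
    intro j hj
    have hil : (f ⟨j, hj⟩).1 < l.length := by
      have := (f ⟨j, hj⟩).2; simpa using this
    have hmem : l[(f ⟨j, hj⟩).1] ∈ l' := hsub.subset (List.getElem_mem hil)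
    obtain ⟨k, hk, hke⟩ := List.mem_iff_getElem.mp hmem
    refine ⟨k, by simpa using hk, ?_⟩
    have e1 : (l'.map starR)[k]'(by simpa using hk) = (l.map starR).get (f ⟨j, hj⟩) := by
      simp only [List.get_eq_getElem, List.getElem_map, hke]
    rw [e1]
    exact hf ⟨j, hj⟩
  have c5 : ∀ {S : STy} {l' : List RawTy}, (∀ R' ∈ l', SubS S (.inter [R'])) →
      (∀ R' ∈ l', SubSigU (starS S) (starS (.inter [R']))) →
      SubSigU (starS S) (starS (.inter l')) := by
    intro S l' _ ih
    simp only [starS, starRList_eq, List.map_cons, List.map_nil] at ih ⊢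
    apply sigU_of_idx
    intro j hj
    have hjl : j < l'.length := by simpa using hj
    obtain ⟨f, hf⟩ := ih (l'[j]'hjl) (List.getElem_mem hjl)
    refine ⟨(f ⟨0, by simp⟩).1, (f ⟨0, by simp⟩).2, ?_⟩
    have h0 := hf ⟨0, by simp⟩
    have e1 : (l'.map starR)[j]'(by simpa using hj) = starR (l'[j]'hjl) := by
      simp
    rw [e1]
    exact h0
  have c6 : ∀ {S S' : STy}, SubS S S' → SubSigU (starS S) (starS S') →
      SubKapU (plusT (.union [S'])) (plusT (.union [S])) := by
    intro S S' _ ih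
    simp only [plusT, plusSList_eq, List.map_cons, List.map_nil]
    apply kapU_of_idx
    intro j hj
    have hj1 : j < 1 := by simpa using hj
    have hj0 : j = 0 := by omega
    subst hj0
    exact ⟨0, by simp, SubKap.neg ih⟩
  have c7 : ∀ {T : TTy} {l l' : List STy}, SubT T (.union l) → l.Subperm l' →
      SubKapU (plusT (.union l)) (plusT T) → SubKapU (plusT (.union l')) (plusT T) := by
    intro T l l' _ hsub ih
    simp only [plusT, plusSList_eq] at ih ⊢
    obtain ⟨f, hf⟩ := ih
    apply kapU_of_idx
    intro j hj
    have hil : (f ⟨j, hj⟩).1 < l.length := by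
      have := (f ⟨j, hj⟩).2; simpa using this
    have hmem : l[(f ⟨j, hj⟩).1] ∈ l' := hsub.subset (List.getElem_mem hil)
    obtain ⟨k, hk, hke⟩ := List.mem_iff_getElem.mp hmem
    refine ⟨k, by simpa using hk, ?_⟩
    have e1 : (l'.map starS)[k]'(by simpa using hk) = (l.map starS).get (f ⟨j, hj⟩) := by
      simp only [List.get_eq_getElem, List.getElem_map, hke]
    rw [e1]
    exact hf ⟨j, hj⟩
  have c8 : ∀ {l : List STy} {T : TTy}, (∀ S ∈ l, SubT (.union [S]) T) →
      (∀ S ∈ l, SubKapU (plusT T) (plusT (.union [S]))) →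
      SubKapU (plusT T) (plusT (.union l)) := by
    intro l T _ ih
    simp only [plusT, plusSList_eq, List.map_cons, List.map_nil] at ih ⊢
    apply kapU_of_idx
    intro j hj
    have hjl : j < l.length := by simpa using hj
    obtain ⟨f, hf⟩ := ih (l[j]'hjl) (List.getElem_mem hjl)
    refine ⟨(f ⟨0, by simp⟩).1, (f ⟨0, by simp⟩).2, ?_⟩
    have h0 := hf ⟨0, by simp⟩
    have e1 : (l.map starS)[j]'(by simpa using hj) = starS (l[j]'hjl) := by
      simp
    rw [e1]
    exact h0
  have hT : ∀ T₀ T₁ : TTy, SubT T₀ T₁ → SubKapU (plusT T₁) (plusT T₀) := by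
    intro T₀ T₁ h
    exact SubT.rec (motive_1 := fun R R' _ => SubSig (starR R) (starR R'))
      (motive_2 := fun S S' _ => SubSigU (starS S) (starS S'))
      (motive_3 := fun T T' _ => SubKapU (plusT T') (plusT T))
      c1 (fun a b => c2 a b) (fun a => c3 a) (fun a b => c4 a b) (fun a => c5 a)
      (fun a => c6 a) (fun a b => c7 a b) (fun a => c8 a) h
  have hS : ∀ S₀ S₁ : STy, SubS S₀ S₁ → SubSigU (starS S₀) (starS S₁) := by
    intro S₀ S₁ h
    exact SubS.rec (motive_1 := fun R R' _ => SubSig (starR R) (starR R'))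
      (motive_2 := fun S S' _ => SubSigU (starS S) (starS S'))
      (motive_3 := fun T T' _ => SubKapU (plusT T') (plusT T))
      c1 (fun a b => c2 a b) (fun a => c3 a) (fun a b => c4 a b) (fun a => c5 a)
      (fun a => c6 a) (fun a b => c7 a b) (fun a => c8 a) h
  refine ⟨fun T₀ T₁ h => ?_, hT, hS⟩
  rw [cps_eq, cps_eq]
  exact SubTau.neg (hT T₀ T₁ h)
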